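/- The postprocessing correction minimizes the weighted norm: among all corrections d : E → ℝ on edges of a finite connected graph with weights ω_e > 0 such that U + d is locally conservative (i.e., for each vertex v, Σ_{e∋v} ± d_e = R(v) where Σ_v R(v) = 0), the correction of the form d_e = ω_e^{-1}(y(v₊) − y(v₋)) for the graph-Laplacian solution y uniquely minimizes the weighted norm Σ_e ω_e d_e². -/
import Mathlib


/-- Jump of a vertex function across an oriented edge: `⟦y⟧_e = y(e₊) − y(e₋)`. -/
def edgeJump {V E : Type*} (ends : E → V × V) (y : V → ℝ) (e : E) : ℝ :=
  y (ends e).2 - y (ends e).1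

/-- Signed incidence of vertex `v` in oriented edge `e`. -/
def incidence {V E : Type*} [DecidableEq V] (ends : E → V × V) (v : V) (e : E) : ℝ :=
  (if (ends e).2 = v then (1:ℝ) else 0) - (if (ends e).1 = v then (1:ℝ) else 0)

section Aux

variable {V E : Type*} [Fintype V] [Fintype E] [DecidableEq V]

lemma sum_incidence_mul (ends : E → V × V) (y : V → ℝ) (e : E) :
    ∑ v, y v * incidence ends v e = edgeJump ends y e := by
  simp [incidence, edgeJump, mul_sub, mul_ite, mul_one, mul_zero,
    Finset.sum_sub_distrib, Finset.sum_ite_eq]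

/-- Summation by parts. -/
lemma swap_sum (ends : E → V × V) (y : V → ℝ) (c : E → ℝ) :
    ∑ e, c e * edgeJump ends y e = ∑ v, y v * ∑ e, incidence ends v e * c e := by
  calc ∑ e, c e * edgeJump ends y e
      = ∑ e, ∑ v, y v * incidence ends v e * c e := by
        refine Finset.sum_congr rfl fun e _ => ?_
        rw [← Finset.sum_mul, sum_incidence_mul, mul_comm]
    _ = ∑ v, ∑ e, y v * incidence ends v e * c e := Finset.sum_comm
    _ = ∑ v, y v * ∑ e, incidence ends v e * c e := by
        refine Finset.sum_congr rfl fun v _ => ?_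
        rw [Finset.mul_sum]
        exact Finset.sum_congr rfl fun e _ => by ring

lemma sum_incidence (ends : E → V × V) (e : E) :
    ∑ v, incidence ends v e = 0 := by
  simp [incidence, Finset.sum_sub_distrib, Finset.sum_ite_eq]

/-- The weighted graph Laplacian as a linear map. -/
noncomputable def Lap (ends : E → V × V) (ω : E → ℝ) : (V → ℝ) →ₗ[ℝ] (V → ℝ) where
  toFun y v := ∑ e, incidence ends v e * ((ω e)⁻¹ * edgeJump ends y e)
  map_add' y z := by
    funext v
    rw [Pi.add_apply, ← Finset.sum_add_distrib]
    refine Finset.sum_congr rfl fun e _ => ?_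
    simp only [edgeJump, Pi.add_apply]
    ring
  map_smul' r y := by
    funext v
    simp only [RingHom.id_apply, Pi.smul_apply, smul_eq_mul, Finset.mul_sum]
    refine Finset.sum_congr rfl fun e _ => ?_
    simp only [edgeJump, Pi.smul_apply, smul_eq_mul]
    ring

/-- Sum functional. -/
def sumF : (V → ℝ) →ₗ[ℝ] ℝ where
  toFun f := ∑ v, f v
  map_add' f g := by simp [Finset.sum_add_distrib]
  map_smul' r f := by simp [Finset.mul_sum]

lemma lap_ker_eq (ends : E → V × V) (ω : E → ℝ) (hω : ∀ e, 0 < ω e)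
    (hconn : (SimpleGraph.fromRel (fun v w => ∃ e, ends e = (v, w))).Connected) :
    LinearMap.ker (Lap ends ω) = Submodule.span ℝ {(fun _ => (1:ℝ) : V → ℝ)} := by
  apply le_antisymm
  · intro y hy
    have hy0 : ∀ v, (Lap ends ω y) v = 0 := fun v => by
      rw [LinearMap.mem_ker] at hy; rw [hy]; rfl
    -- quadratic form vanishes
    have hq : ∑ e, (ω e)⁻¹ * (edgeJump ends y e) ^ 2 = 0 := by
      have := swap_sum ends y (fun e => (ω e)⁻¹ * edgeJump ends y e)
      have h2 : ∑ v, y v * ∑ e, incidence ends v e * ((ω e)⁻¹ * edgeJump ends y e) = 0 := by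
        refine Finset.sum_eq_zero fun v _ => ?_
        have := hy0 v
        simp only [Lap, LinearMap.coe_mk, AddHom.coe_mk] at this
        rw [this, mul_zero]
      calc ∑ e, (ω e)⁻¹ * (edgeJump ends y e) ^ 2
          = ∑ e, ((ω e)⁻¹ * edgeJump ends y e) * edgeJump ends y e := by
            refine Finset.sum_congr rfl fun e _ => by ring
        _ = 0 := by rw [this]; exact h2
    have hjump : ∀ e, edgeJump ends y e = 0 := by
      intro e
      have hterm := (Finset.sum_eq_zero_iff_of_nonneg (fun e _ =>
        mul_nonneg (le_of_lt (inv_pos.mpr (hω e))) (sq_nonneg _))).mp hq e (Finset.mem_univ e)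
      have hωne : (ω e)⁻¹ ≠ 0 := ne_of_gt (inv_pos.mpr (hω e))
      have := (mul_eq_zero.mp hterm).resolve_left hωne
      exact (pow_eq_zero_iff two_ne_zero).mp this
    -- y constant along edges, hence constant by connectivity
    have hadj : ∀ {v w : V},
        (SimpleGraph.fromRel (fun v w => ∃ e, ends e = (v, w))).Adj v w → y v = y w := by
      intro v w h
      rw [SimpleGraph.fromRel_adj] at h
      rcases h.2 with ⟨e, he⟩ | ⟨e, he⟩
      · have := hjump e
        simp only [edgeJump, he] at this
        linarith
      · have := hjump e
        simp only [edgeJump, he] at this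
        linarith
    obtain ⟨v₀⟩ := hconn.nonempty
    have hconst : ∀ v, y v = y v₀ := by
      intro v
      obtain ⟨p⟩ := hconn.preconnected v v₀
      induction p with
      | nil => rfl
      | cons h p ih => exact (hadj h).trans ih
    have : y = (y v₀) • (fun _ => (1:ℝ)) := by
      funext v; simp [hconst v]
    rw [this]
    exact Submodule.smul_mem _ _ (Submodule.mem_span_singleton_self _)
  · rw [Submodule.span_le, Set.singleton_subset_iff]
    have : Lap ends ω (fun _ => (1:ℝ)) = 0 := by
      funext v
      simp only [Lap, LinearMap.coe_mk, AddHom.coe_mk, Pi.zero_apply]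
      refine Finset.sum_eq_zero fun e _ => by simp [edgeJump]
    exact LinearMap.mem_ker.mpr this

lemma lap_surj (ends : E → V × V) (ω : E → ℝ) (hω : ∀ e, 0 < ω e)
    (hconn : (SimpleGraph.fromRel (fun v w => ∃ e, ends e = (v, w))).Connected)
    (R : V → ℝ) (hR : ∑ v, R v = 0) :
    ∃ y : V → ℝ, Lap ends ω y = R := by
  obtain ⟨v₀⟩ := hconn.nonempty
  have hcard : 0 < Fintype.card V := Fintype.card_pos_iff.mpr ⟨v₀⟩
  -- range Lap ≤ ker sumF
  have hle : LinearMap.range (Lap (V := V) ends ω) ≤ LinearMap.ker (sumF (V := V)) := by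
    rintro _ ⟨y, rfl⟩
    simp only [LinearMap.mem_ker, sumF, LinearMap.coe_mk, AddHom.coe_mk]
    simp only [Lap, LinearMap.coe_mk, AddHom.coe_mk]
    rw [Finset.sum_comm]
    refine Finset.sum_eq_zero fun e _ => ?_
    rw [← Finset.sum_mul, sum_incidence, zero_mul]
  -- sumF surjective
  have hsurj : Function.Surjective (sumF (V := V)) := by
    intro r
    refine ⟨Pi.single v₀ r, ?_⟩
    simp [sumF, Finset.sum_pi_single]
  -- finrank of ker sumF
  have h1 : Module.finrank ℝ (LinearMap.ker (sumF (V := V)))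
      = Fintype.card V - 1 := by
    have := LinearMap.finrank_range_add_finrank_ker (sumF (V := V))
    rw [LinearMap.range_eq_top.mpr hsurj, finrank_top, Module.finrank_self,
      Module.finrank_pi] at this
    omega
  -- finrank of ker Lap = 1
  have hone : ((fun _ => (1:ℝ)) : V → ℝ) ≠ 0 := by
    intro h
    have := congrFun h v₀
    norm_num at this
  have h2 : Module.finrank ℝ (LinearMap.ker (Lap (V := V) ends ω)) = 1 := by
    rw [lap_ker_eq ends ω hω hconn, finrank_span_singleton hone]
  have h3 : Module.finrank ℝ (LinearMap.range (Lap (V := V) ends ω))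
      = Fintype.card V - 1 := by
    have := LinearMap.finrank_range_add_finrank_ker (Lap (V := V) ends ω)
    rw [h2, Module.finrank_pi] at this
    omega
  have heq : LinearMap.range (Lap (V := V) ends ω) = LinearMap.ker (sumF (V := V)) :=
    Submodule.eq_of_le_of_finrank_eq hle (by rw [h3, h1])
  have hRmem : R ∈ LinearMap.ker (sumF (V := V)) := by
    simp [sumF, LinearMap.mem_ker, hR]
  rw [← heq] at hRmem
  exact hRmem

end Aux

/-- Among all edge corrections `d` making the flux locally conservative
(`Σ_{e∋v} ± d_e = R(v)` for every vertex `v`), the gradient-type correction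
`d_e = ω_e⁻¹ ⟦y⟧_e` coming from the weighted graph-Laplacian solution `y`
uniquely minimizes the weighted norm `Σ_e ω_e d_e²`. -/
theorem flux_postprocessing_minimizer
    {V E : Type*} [Fintype V] [Fintype E] [DecidableEq V]
    (ends : E → V × V) (ω : E → ℝ) (hω : ∀ e, 0 < ω e)
    (hconn : (SimpleGraph.fromRel (fun v w => ∃ e, ends e = (v, w))).Connected)
    (R : V → ℝ) (hR : ∑ v, R v = 0) :
    ∃ y : V → ℝ,
      (∀ v, ∑ e, incidence ends v e * ((ω e)⁻¹ * edgeJump ends y e) = R v) ∧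
      (∀ d : E → ℝ, (∀ v, ∑ e, incidence ends v e * d e = R v) →
        (∑ e, ω e * ((ω e)⁻¹ * edgeJump ends y e)^2 ≤ ∑ e, ω e * d e^2) ∧
        (∑ e, ω e * d e^2 = ∑ e, ω e * ((ω e)⁻¹ * edgeJump ends y e)^2 →
          ∀ e, d e = (ω e)⁻¹ * edgeJump ends y e)) := by
  obtain ⟨y, hy⟩ := lap_surj ends ω hω hconn R hR
  have hyv : ∀ v, ∑ e, incidence ends v e * ((ω e)⁻¹ * edgeJump ends y e) = R v := by
    intro v
    have := congrFun hy v
    simpa [Lap] using this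
  refine ⟨y, hyv, fun d hd => ?_⟩
  set g : E → ℝ := fun e => (ω e)⁻¹ * edgeJump ends y e with hg
  -- orthogonality: ∑ ω (d - g) g = 0
  have horth : ∑ e, ω e * ((d e - g e) * g e) = 0 := by
    have key : ∀ e, ω e * ((d e - g e) * g e) = (d e - g e) * edgeJump ends y e := by
      intro e
      have h1 : ω e * ((d e - g e) * g e)
          = (d e - g e) * ((ω e * (ω e)⁻¹) * edgeJump ends y e) := by
        simp only [hg]; ring
      rw [h1, mul_inv_cancel₀ (ne_of_gt (hω e)), one_mul]
    rw [Finset.sum_congr rfl fun e _ => key e, swap_sum ends y (fun e => d e - g e)]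
    refine Finset.sum_eq_zero fun v _ => ?_
    have : ∑ e, incidence ends v e * (d e - g e) = 0 := by
      have h1 := hd v
      have h2 := hyv v
      rw [show (fun e => incidence ends v e * (d e - g e))
          = fun e => incidence ends v e * d e - incidence ends v e * g e from
          funext fun e => by ring, Finset.sum_sub_distrib, h1]
      simp only [hg, h2, sub_self]
    rw [this, mul_zero]
  -- Pythagorean decomposition
  have hpyth : ∑ e, ω e * d e ^ 2
      = ∑ e, ω e * g e ^ 2 + ∑ e, ω e * (d e - g e) ^ 2 := by
    have : ∀ e, ω e * d e ^ 2
        = ω e * g e ^ 2 + ω e * (d e - g e) ^ 2 + 2 * (ω e * ((d e - g e) * g e)) := by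
      intro e; ring
    rw [Finset.sum_congr rfl fun e _ => this e, Finset.sum_add_distrib,
      Finset.sum_add_distrib, ← Finset.mul_sum, horth, mul_zero, add_zero]
  have hnn : 0 ≤ ∑ e, ω e * (d e - g e) ^ 2 :=
    Finset.sum_nonneg fun e _ => mul_nonneg (le_of_lt (hω e)) (sq_nonneg _)
  constructor
  · rw [hpyth]; linarith
  · intro heq e
    have hz : ∑ e, ω e * (d e - g e) ^ 2 = 0 := by rw [hpyth] at heq; linarith
    have := (Finset.sum_eq_zero_iff_of_nonneg
      (fun e _ => mul_nonneg (le_of_lt (hω e)) (sq_nonneg _))).mp hz e (Finset.mem_univ e)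
    have h0 : (d e - g e) ^ 2 = 0 :=
      (mul_eq_zero.mp this).resolve_left (ne_of_gt (hω e))
    have := (pow_eq_zero_iff two_ne_zero).mp h0
    have : d e = g e := by linarith [sub_eq_zero.mp this]
    simpa [hg] using this
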